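/- arXiv:1302.5868 — 4 statements merged into one kernel-verified Lean document; each statement's English description precedes it below -/
import Mathlib

section
/- Young-type entropy inequality: for a probability measure μ on a measurable space, a positive bounded measurable function f with μ(f) appearing, and a measurable function g with μ(e^g) < ∞, one has μ(fg) ≤ μ(f log f) - μ(f) log μ(f) + μ(f) log μ(e^g). -/
open MeasureTheory Real

lemma young_aux (a t : ℝ) (ha : 0 < a) :
    a * t ≤ a * Real.log a - a + Real.exp t := by
  have h := Real.add_one_le_exp (t - Real.log a)
  have h2 : a * (t - Real.log a + 1) ≤ a * Real.exp (t - Real.log a) := by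
    exact mul_le_mul_of_nonneg_left h ha.le
  have h3 : a * Real.exp (t - Real.log a) = Real.exp t := by
    rw [← Real.exp_log ha, ← Real.exp_add, Real.log_exp]
    ring_nf
  nlinarith [h2, h3]

/-- Young-type entropy inequality:
`μ(fg) ≤ μ(f log f) - μ(f) log μ(f) + μ(f) log μ(e^g)`. -/
theorem stmt6 {E : Type*} [MeasurableSpace E] (μ : Measure E) [IsProbabilityMeasure μ]
    (f g : E → ℝ) (hfm : Measurable f) (hgm : Measurable g)
    (hfpos : ∀ x, 0 < f x) (hfb : ∃ C : ℝ, ∀ x, f x ≤ C)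
    (hintf : Integrable f μ)
    (hintfg : Integrable (fun x => f x * g x) μ)
    (hintflog : Integrable (fun x => f x * Real.log (f x)) μ)
    (hinteg : Integrable (fun x => Real.exp (g x)) μ) :
    ∫ x, f x * g x ∂μ
      ≤ ∫ x, f x * Real.log (f x) ∂μ
        - (∫ x, f x ∂μ) * Real.log (∫ x, f x ∂μ)
        + (∫ x, f x ∂μ) * Real.log (∫ x, Real.exp (g x) ∂μ) := by
  set F := ∫ x, f x ∂μ with hFdef
  set Z := ∫ x, Real.exp (g x) ∂μ with hZdef
  have hF : 0 < F := by
    rw [hFdef, integral_pos_iff_support_of_nonneg (fun x => (hfpos x).le) hintf]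
    have : Function.support f = Set.univ := by
      ext x; simp [Function.support, (hfpos x).ne']
    rw [this]
    simp
  have hZ : 0 < Z := by
    rw [hZdef, integral_pos_iff_support_of_nonneg
      (fun x => (Real.exp_pos _).le) hinteg]
    have : Function.support (fun x => Real.exp (g x)) = Set.univ := by
      ext x; simp [Function.support, (Real.exp_pos (g x)).ne']
    rw [this]
    simp
  set c := Real.log Z - Real.log F with hcdef
  have hpt : ∀ x, f x * g x ≤
      f x * Real.log (f x) - f x + c * f x + Real.exp (g x - c) := by
    intro x
    have := young_aux (f x) (g x - c) (hfpos x)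
    nlinarith [this]
  have hexp : Integrable (fun x => Real.exp (g x - c)) μ := by
    have : (fun x => Real.exp (g x - c)) =
        fun x => Real.exp (-c) * Real.exp (g x) := by
      funext x; rw [← Real.exp_add]; ring_nf
    rw [this]
    exact hinteg.const_mul _
  have hrhs : Integrable (fun x =>
      f x * Real.log (f x) - f x + c * f x + Real.exp (g x - c)) μ :=
    ((hintflog.sub hintf).add (hintf.const_mul c)).add hexp
  have hint_le : ∫ x, f x * g x ∂μ ≤
      ∫ x, (f x * Real.log (f x) - f x + c * f x + Real.exp (g x - c)) ∂μ :=
    integral_mono hintfg hrhs hpt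
  have hsplit : ∫ x, (f x * Real.log (f x) - f x + c * f x + Real.exp (g x - c)) ∂μ
      = (∫ x, f x * Real.log (f x) ∂μ) - F + c * F + Real.exp (-c) * Z := by
    have hA : Integrable (fun x => f x * Real.log (f x) - f x + c * f x) μ :=
      (hintflog.sub hintf).add (hintf.const_mul c)
    have hB : Integrable (fun x => f x * Real.log (f x) - f x) μ :=
      hintflog.sub hintf
    rw [integral_add hA hexp, integral_add hB (hintf.const_mul c),
        integral_sub hintflog hintf, integral_const_mul]
    have : ∫ x, Real.exp (g x - c) ∂μ = Real.exp (-c) * Z := by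
      have h1 : (fun x => Real.exp (g x - c)) =
          fun x => Real.exp (-c) * Real.exp (g x) := by
        funext x; rw [← Real.exp_add]; ring_nf
      rw [h1, integral_const_mul]
    rw [this]
  have hec : Real.exp (-c) * Z = F := by
    rw [hcdef]
    rw [neg_sub, Real.exp_sub, Real.exp_log hF, Real.exp_log hZ]
    field_simp
  rw [hsplit, hec] at hint_le
  have : c * F = F * Real.log Z - F * Real.log F := by rw [hcdef]; ring
  linarith [hint_le, this.le]
end

section
/- If a semigroup P_T on bounded measurable functions satisfies the shift Harnack inequality (P_T f(x))^p ≤ (P_T{f(y+·)^p})(x) · exp(C₁|y|²) for all non-negative bounded measurable f, all x,y ∈ ℝ, some p > 1 and constant C₁ > 0, then for each x the measure A ↦ P_T 1_A(x) is absolutely continuous with respect to Lebesgue measure on ℝ. -/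
open MeasureTheory Real

/-- Shift Harnack inequality implies absolute continuity: if the Markov operator
`P_T f x = ∫ f dμ_x` satisfies `(P_T f(x))^p ≤ P_T(f(y+·)^p)(x) · e^{C₁ y²}` for
all nonnegative bounded measurable `f`, then each `μ_x` is absolutely continuous
with respect to Lebesgue measure. -/
theorem stmt8 (μ : ℝ → Measure ℝ) (hprob : ∀ x, IsProbabilityMeasure (μ x))
    (p C1 : ℝ) (hp : 1 < p) (hC1 : 0 < C1)
    (harnack : ∀ f : ℝ → ℝ, Measurable f → (∀ z, 0 ≤ f z) → (∃ C : ℝ, ∀ z, f z ≤ C) →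
      ∀ x y : ℝ,
        (∫ z, f z ∂(μ x)) ^ p ≤ (∫ z, (f (y + z)) ^ p ∂(μ x)) * Real.exp (C1 * y^2)) :
    ∀ x : ℝ, μ x ≪ (volume : Measure ℝ) := by
  intro x
  haveI := hprob x
  apply Measure.AbsolutelyContinuous.mk
  intro A hA hA0
  have hp0 : p ≠ 0 := by positivity
  -- measurability of the shifted indicator
  have hF : Measurable fun q : ℝ × ℝ =>
      A.indicator (fun _ => (1 : ENNReal)) (q.1 + q.2) :=
    (measurable_one.indicator hA).comp (measurable_fst.add measurable_snd)
  set g : ℝ → ENNReal :=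
    fun y => ∫⁻ z, A.indicator (fun _ => (1 : ENNReal)) (y + z) ∂(μ x) with hg
  -- rewrite μ x of shifted preimage as lintegral
  have h1 : ∀ y : ℝ, μ x ((fun z => y + z) ⁻¹' A) = g y := by
    intro y
    have hmeas : MeasurableSet ((fun z => y + z) ⁻¹' A) :=
      hA.preimage (measurable_const_add y)
    rw [hg, ← lintegral_indicator_one hmeas]
    refine lintegral_congr fun z => ?_
    by_cases h : y + z ∈ A <;> simp [Set.indicator, h, Set.mem_preimage]
  have hmeasg : Measurable g := hF.lintegral_prod_right'
  have hint : ∫⁻ y, g y ∂(volume : Measure ℝ) = 0 := by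
    calc ∫⁻ y, g y ∂(volume : Measure ℝ)
        = ∫⁻ z, ∫⁻ y, A.indicator (fun _ => (1 : ENNReal)) (y + z)
            ∂(volume : Measure ℝ) ∂(μ x) :=
          lintegral_lintegral_swap hF.aemeasurable
      _ = ∫⁻ z, (volume : Measure ℝ) ((fun y => y + z) ⁻¹' A) ∂(μ x) := by
          refine lintegral_congr fun z => ?_
          have hmeas : MeasurableSet ((fun y => y + z) ⁻¹' A) :=
            hA.preimage (measurable_add_const z)
          rw [← lintegral_indicator_one hmeas]
          refine lintegral_congr fun y => ?_
          by_cases h : y + z ∈ A <;> simp [Set.indicator, h, Set.mem_preimage]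
      _ = ∫⁻ z, (volume : Measure ℝ) A ∂(μ x) := by
          refine lintegral_congr fun z => ?_
          exact measure_preimage_add_right _ _ _
      _ = 0 := by rw [hA0]; simp
  have hae : ∀ᵐ y ∂(volume : Measure ℝ), g y = 0 :=
    (lintegral_eq_zero_iff hmeasg).mp hint
  obtain ⟨y, hy⟩ := hae.exists
  have hy0 : μ x ((fun z => y + z) ⁻¹' A) = 0 := (h1 y).trans hy
  -- apply the Harnack inequality to the indicator of A
  set f : ℝ → ℝ := A.indicator (fun _ => (1 : ℝ)) with hf
  have hfm : Measurable f := measurable_one.indicator hA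
  have hf0 : ∀ z, 0 ≤ f z := fun z => Set.indicator_nonneg (fun _ _ => zero_le_one) z
  have hfb : ∃ C : ℝ, ∀ z, f z ≤ C :=
    ⟨1, fun z => Set.indicator_le_self' (fun _ _ => zero_le_one) z⟩
  have hkey := harnack f hfm hf0 hfb x y
  have hInt1 : ∫ z, f z ∂(μ x) = (μ x A).toReal := by
    rw [hf]; exact integral_indicator_one hA
  have hInt2 : ∫ z, (f (y + z)) ^ p ∂(μ x) = 0 := by
    have heq : ∀ z, (f (y + z)) ^ p
        = ((fun z => y + z) ⁻¹' A).indicator (fun _ => (1 : ℝ)) z := by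
      intro z
      by_cases h : y + z ∈ A <;>
        simp [hf, Set.indicator, h, Set.mem_preimage, Real.rpow_natCast,
          Real.zero_rpow hp0]
    calc ∫ z, (f (y + z)) ^ p ∂(μ x)
        = ∫ z, ((fun z => y + z) ⁻¹' A).indicator (fun _ => (1 : ℝ)) z ∂(μ x) :=
          integral_congr_ae (Filter.Eventually.of_forall heq)
      _ = (μ x ((fun z => y + z) ⁻¹' A)).toReal :=
          integral_indicator_one (hA.preimage (measurable_const_add y))
      _ = 0 := by rw [hy0]; simp
  rw [hInt1, hInt2, zero_mul] at hkey
  have h0 : (μ x A).toReal = 0 := by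
    have hle : ((μ x A).toReal) ^ p = 0 :=
      le_antisymm hkey (Real.rpow_nonneg ENNReal.toReal_nonneg p)
    have := (Real.rpow_eq_zero ENNReal.toReal_nonneg hp0).mp hle
    exact this
  rcases (ENNReal.toReal_eq_zero_iff _).mp h0 with h | h
  · exact h
  · exact absurd h (measure_ne_top _ _)
end

section
/- Harnack inequality implies strong Feller: if a Markov operator P_T on ℬ_b(ℝ) satisfies (P_T f(x))^p ≤ P_T f^p(y) · exp( (p/(p-1)) C |x-y|² ) for some p > 1, constant C > 0, all x,y and all non-negative f ∈ ℬ_b(ℝ), then P_T f is continuous for every f ∈ ℬ_b(ℝ), i.e. lim_{y→x} P_T f(y) = P_T f(x). -/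
open MeasureTheory Real Filter Topology

private lemma integ_bdd {ν : Measure ℝ} [IsProbabilityMeasure ν] {f : ℝ → ℝ}
    (hf : Measurable f) {M : ℝ} (hM : ∀ z, |f z| ≤ M) : Integrable f ν :=
  (integrable_const M).mono' hf.aestronglyMeasurable (Filter.Eventually.of_forall hM)

/-- Convexity interpolation: for `t ∈ [0, δ]`, `(1+t)^p ≤ 1 + K_δ t` with
`K_δ = ((1+δ)^p - 1)/δ`. -/
private lemma interp_rpow {p : ℝ} (hp : 1 ≤ p) {δ t : ℝ} (hδ : 0 < δ) (ht0 : 0 ≤ t)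
    (htδ : t ≤ δ) : (1 + t) ^ p ≤ 1 + (((1 + δ) ^ p - 1) / δ) * t := by
  have hmem1 : (1 : ℝ) ∈ Set.Ici (0 : ℝ) := by norm_num
  have hmem2 : (1 + δ : ℝ) ∈ Set.Ici (0 : ℝ) := by simp; linarith
  have ha : 0 ≤ 1 - t / δ := by
    have : t / δ ≤ 1 := (div_le_one hδ).2 htδ
    linarith
  have hb : 0 ≤ t / δ := div_nonneg ht0 hδ.le
  have hsum : (1 - t / δ) + t / δ = 1 := by ring
  have h := (convexOn_rpow hp).2 hmem1 hmem2 ha hb hsum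
  have e1 : (1 - t / δ) • (1 : ℝ) + (t / δ) • (1 + δ) = 1 + t := by
    simp only [smul_eq_mul]
    field_simp
    ring
  rw [e1] at h
  simp only [smul_eq_mul, Real.one_rpow] at h
  calc (1 + t) ^ p ≤ (1 - t / δ) * 1 + t / δ * (1 + δ) ^ p := h
    _ = 1 + (((1 + δ) ^ p - 1) / δ) * t := by field_simp; ring

/-- Lower semicontinuity from the Harnack inequality, for `g` with `0 ≤ g ≤ 1`. -/
private lemma lsc (μ : ℝ → Measure ℝ) (hprob : ∀ x, IsProbabilityMeasure (μ x))
    (p C : ℝ) (hp : 1 < p) (hC : 0 < C)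
    (harnack : ∀ f : ℝ → ℝ, Measurable f → (∀ z, 0 ≤ f z) →
      (∃ M : ℝ, ∀ z, f z ≤ M) → ∀ x y : ℝ,
        (∫ z, f z ∂(μ x)) ^ p
          ≤ (∫ z, (f z) ^ p ∂(μ y)) * Real.exp ((p/(p-1)) * C * (x - y)^2))
    (g : ℝ → ℝ) (hg : Measurable g) (hg0 : ∀ z, 0 ≤ g z) (hg1 : ∀ z, g z ≤ 1)
    (x : ℝ) {ε : ℝ} (hε : 0 < ε) :
    ∀ᶠ y in 𝓝 x, (∫ z, g z ∂(μ x)) - ε < ∫ z, g z ∂(μ y) := by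
  haveI := hprob x
  have hppos : (0 : ℝ) < p := lt_trans one_pos hp
  set a : ℝ := ∫ z, g z ∂(μ x) with ha_def
  have ha0 : 0 ≤ a := integral_nonneg hg0
  -- The slope `K δ = ((1+δ)^p - 1)/δ` tends to `p` as `δ → 0⁺`.
  have hK : Tendsto (fun δ : ℝ => ((1 + δ) ^ p - 1) / δ) (𝓝[>] (0:ℝ)) (𝓝 p) := by
    have h2 : HasDerivAt (fun s : ℝ => s ^ p) (p * ((1:ℝ) + 0) ^ (p - 1)) ((1:ℝ) + 0) :=
      Real.hasDerivAt_rpow_const (Or.inl (by norm_num))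
    have h3 : HasDerivAt (fun t : ℝ => 1 + t) 1 0 := by
      simpa using (hasDerivAt_id (0:ℝ)).const_add 1
    have h1 : HasDerivAt (fun t : ℝ => (1 + t) ^ p) p 0 := by
      have := h2.comp 0 h3
      simp only [add_zero, Real.one_rpow, mul_one] at this
      exact this
    have hslope := hasDerivAt_iff_tendsto_slope.mp h1
    have heq : ∀ δ : ℝ, δ ≠ 0 → slope (fun t : ℝ => (1 + t) ^ p) 0 δ
        = ((1 + δ) ^ p - 1) / δ := by
      intro δ hδ
      rw [slope_def_field]
      simp [Real.one_rpow]
    refine Tendsto.congr' ?_ (hslope.mono_left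
      (nhdsWithin_mono 0 (fun y hy => ne_of_gt hy)))
    filter_upwards [self_mem_nhdsWithin] with δ hδ
    exact heq δ (ne_of_gt hδ)
  -- Hence `p*a/K δ → a`; choose δ with `p*a/K δ > a - ε/2` and `δ > 0`.
  have hdiv : Tendsto (fun δ : ℝ => p * a / (((1 + δ) ^ p - 1) / δ)) (𝓝[>] (0:ℝ))
      (𝓝 (p * a / p)) := tendsto_const_nhds.div hK hppos.ne'
  have hppa : p * a / p = a := by field_simp
  rw [hppa] at hdiv
  have hlt : a - ε / 2 < a := by linarith
  obtain ⟨δ, hchoice, hδpos⟩ :=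
    ((hdiv.eventually (eventually_gt_nhds hlt)).and self_mem_nhdsWithin).exists
  have hδpos : (0:ℝ) < δ := hδpos
  set K : ℝ := ((1 + δ) ^ p - 1) / δ with hK_def
  have h1δ : (1:ℝ) < (1 + δ) ^ p := by
    calc (1:ℝ) = (1:ℝ) ^ p := (Real.one_rpow p).symm
      _ < (1 + δ) ^ p := Real.rpow_lt_rpow zero_le_one (by linarith) hppos
  have hKpos : 0 < K := div_pos (by linarith) hδpos
  -- Key Harnack estimate.
  have key : ∀ y : ℝ, 1 + p * (δ * a)
      ≤ (1 + K * (δ * ∫ z, g z ∂(μ y))) * Real.exp ((p/(p-1)) * C * (x - y)^2) := by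
    intro y
    haveI := hprob y
    set b : ℝ := ∫ z, g z ∂(μ y) with hb_def
    have hb0 : 0 ≤ b := integral_nonneg hg0
    have hFmeas : Measurable (fun z => 1 + δ * g z) :=
      measurable_const.add (hg.const_mul δ)
    have hF0 : ∀ z, 0 ≤ 1 + δ * g z := fun z => by nlinarith [hg0 z]
    have hFbd : ∀ z, 1 + δ * g z ≤ 1 + δ := fun z => by nlinarith [hg1 z]
    have hgabs : ∀ z, |g z| ≤ 1 := fun z => abs_le.2 ⟨by linarith [hg0 z], hg1 z⟩
    have hgintx : Integrable g (μ x) := integ_bdd hg hgabs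
    have hginty : Integrable g (μ y) := integ_bdd hg hgabs
    have e1 : ∫ z, (1 + δ * g z) ∂(μ x) = 1 + δ * a := by
      rw [integral_add (integrable_const 1) (hgintx.const_mul δ), integral_const,
        integral_const_mul]
      simp [ha_def]
    have h1 := harnack _ hFmeas hF0 ⟨1 + δ, hFbd⟩ x y
    rw [e1] at h1
    have hbern : 1 + p * (δ * a) ≤ (1 + δ * a) ^ p :=
      one_add_mul_self_le_rpow_one_add (by nlinarith) hp.le
    -- pointwise bound on `(1 + δ g z)^p`
    have hpt : ∀ z, (1 + δ * g z) ^ p ≤ 1 + K * (δ * g z) := by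
      intro z
      have := interp_rpow hp.le hδpos (by nlinarith [hg0 z]) (by nlinarith [hg1 z])
        (t := δ * g z)
      calc (1 + δ * g z) ^ p ≤ 1 + (((1 + δ) ^ p - 1) / δ) * (δ * g z) := this
        _ = 1 + K * (δ * g z) := by rw [hK_def]
    have hFp_meas : Measurable (fun z => (1 + δ * g z) ^ p) :=
      (Real.continuous_rpow_const hppos.le).measurable.comp hFmeas
    have hFp_int : Integrable (fun z => (1 + δ * g z) ^ p) (μ y) := by
      refine integ_bdd hFp_meas (M := (1 + δ) ^ p) fun z => ?_
      rw [abs_of_nonneg (Real.rpow_nonneg (hF0 z) p)]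
      exact Real.rpow_le_rpow (hF0 z) (hFbd z) hppos.le
    have h2 : ∫ z, (1 + δ * g z) ^ p ∂(μ y) ≤ 1 + K * (δ * b) := by
      have hint2 : Integrable (fun z => 1 + K * (δ * g z)) (μ y) :=
        (integrable_const 1).add ((hginty.const_mul δ).const_mul K)
      calc ∫ z, (1 + δ * g z) ^ p ∂(μ y)
          ≤ ∫ z, (1 + K * (δ * g z)) ∂(μ y) :=
            integral_mono hFp_int hint2 hpt
        _ = 1 + K * (δ * b) := by
            rw [integral_add (integrable_const 1)
              ((hginty.const_mul δ).const_mul K), integral_const,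
              integral_const_mul, integral_const_mul]
            simp [hb_def]
    calc 1 + p * (δ * a) ≤ (1 + δ * a) ^ p := hbern
      _ ≤ (∫ z, (1 + δ * g z) ^ p ∂(μ y)) * Real.exp ((p/(p-1)) * C * (x - y)^2) := h1
      _ ≤ (1 + K * (δ * b)) * Real.exp ((p/(p-1)) * C * (x - y)^2) :=
          mul_le_mul_of_nonneg_right h2 (Real.exp_nonneg _)
  -- The continuous comparison function.
  set G : ℝ → ℝ := fun y =>
    ((1 + p * (δ * a)) * Real.exp (-((p/(p-1)) * C * (x - y)^2)) - 1) / (K * δ)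
    with hG_def
  have hGle : ∀ y, G y ≤ ∫ z, g z ∂(μ y) := by
    intro y
    set b : ℝ := ∫ z, g z ∂(μ y) with hb_def
    set E : ℝ := (p/(p-1)) * C * (x - y)^2 with hE_def
    have h3 : (1 + p * (δ * a)) * Real.exp (-E) ≤ 1 + K * (δ * b) := by
      have h4 := mul_le_mul_of_nonneg_left (key y) (Real.exp_nonneg (-E))
      calc (1 + p * (δ * a)) * Real.exp (-E)
          = Real.exp (-E) * (1 + p * (δ * a)) := by ring
        _ ≤ Real.exp (-E) * ((1 + K * (δ * b)) * Real.exp E) := h4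
        _ = (1 + K * (δ * b)) * (Real.exp (-E) * Real.exp E) := by ring
        _ = 1 + K * (δ * b) := by rw [← Real.exp_add]; simp
    rw [hG_def]
    rw [div_le_iff₀ (mul_pos hKpos hδpos)]
    nlinarith [h3]
  have hGcont : ContinuousAt G x := by
    apply ContinuousAt.div_const
    exact ((continuousAt_const.mul
      ((Real.continuous_exp.continuousAt).comp (by fun_prop))).sub continuousAt_const)
  have hGx : a - ε < G x := by
    have : G x = p * a / K := by
      rw [hG_def]
      simp only [sub_self]
      norm_num [Real.exp_zero]
      rw [div_eq_div_iff (by positivity) (ne_of_gt hKpos)]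
      ring
    rw [this]
    calc a - ε < a - ε / 2 := by linarith
      _ < p * a / K := hchoice
  filter_upwards [hGcont.eventually (eventually_gt_nhds hGx)] with y hy
  exact lt_of_lt_of_le hy (hGle y)

/-- Harnack inequality implies the strong Feller property: if for some `p > 1`,
`(P_T f(x))^p ≤ P_T f^p(y) · exp((p/(p-1)) C |x-y|²)` for all nonnegative bounded
measurable `f`, then `x ↦ P_T f(x)` is continuous for every bounded measurable `f`. -/
theorem stmt11 (μ : ℝ → Measure ℝ) (hprob : ∀ x, IsProbabilityMeasure (μ x))
    (p C : ℝ) (hp : 1 < p) (hC : 0 < C)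
    (harnack : ∀ f : ℝ → ℝ, Measurable f → (∀ z, 0 ≤ f z) →
      (∃ M : ℝ, ∀ z, f z ≤ M) → ∀ x y : ℝ,
        (∫ z, f z ∂(μ x)) ^ p
          ≤ (∫ z, (f z) ^ p ∂(μ y)) * Real.exp ((p/(p-1)) * C * (x - y)^2)) :
    ∀ f : ℝ → ℝ, Measurable f → (∃ M : ℝ, ∀ z, |f z| ≤ M) →
      Continuous (fun x => ∫ z, f z ∂(μ x)) := by
  have main : ∀ g : ℝ → ℝ, Measurable g → (∀ z, 0 ≤ g z) → (∀ z, g z ≤ 1) →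
      Continuous (fun x => ∫ z, g z ∂(μ x)) := by
    intro g hg hg0 hg1
    rw [continuous_iff_continuousAt]
    intro x
    haveI := hprob x
    have e : ∀ y : ℝ, ∫ z, (1 - g z) ∂(μ y) = 1 - ∫ z, g z ∂(μ y) := by
      intro y
      haveI := hprob y
      have hgint : Integrable g (μ y) :=
        integ_bdd hg (M := 1) fun z => abs_le.2 ⟨by linarith [hg0 z], hg1 z⟩
      rw [integral_sub (integrable_const 1) hgint, integral_const]
      simp
    rw [ContinuousAt, tendsto_order]
    constructor
    · intro a' ha'
      have hε : (0:ℝ) < (∫ z, g z ∂(μ x)) - a' := by linarith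
      filter_upwards [lsc μ hprob p C hp hC harnack g hg hg0 hg1 x hε] with y hy
      linarith
    · intro b' hb'
      have hε : (0:ℝ) < b' - ∫ z, g z ∂(μ x) := by linarith
      have keyc := lsc μ hprob p C hp hC harnack (fun z => 1 - g z)
        (measurable_const.sub hg) (fun z => by show (0:ℝ) ≤ 1 - g z; linarith [hg1 z])
        (fun z => by show (1:ℝ) - g z ≤ 1; linarith [hg0 z]) x hε
      filter_upwards [keyc] with y hy
      have hy' : (∫ z, (1 - g z) ∂(μ x)) - (b' - ∫ z, g z ∂(μ x))
          < ∫ z, (1 - g z) ∂(μ y) := hy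
      rw [e x, e y] at hy'
      linarith
  intro f hf hbd
  obtain ⟨M, hM⟩ := hbd
  have hM0 : (0:ℝ) ≤ M := le_trans (abs_nonneg _) (hM 0)
  set D : ℝ := M + 1 with hD_def
  have hD : (0:ℝ) < D := by rw [hD_def]; linarith
  have hg : Measurable (fun z => (f z + D) / (2 * D)) := (hf.add_const D).div_const _
  have hg0 : ∀ z, 0 ≤ (f z + D) / (2 * D) := fun z =>
    div_nonneg (by have := abs_le.1 (hM z); linarith) (by linarith)
  have hg1 : ∀ z, (f z + D) / (2 * D) ≤ 1 := fun z =>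
    (div_le_one (by linarith)).2 (by have := abs_le.1 (hM z); linarith)
  have hcont := main _ hg hg0 hg1
  have he : (fun x => ∫ z, f z ∂(μ x))
      = fun x => 2 * D * (∫ z, (f z + D) / (2 * D) ∂(μ x)) - D := by
    funext x
    haveI := hprob x
    have hint : Integrable f (μ x) := integ_bdd hf hM
    rw [integral_div, integral_add hint (integrable_const D), integral_const]
    simp only [measure_univ, probReal_univ, ENNReal.toReal_one, smul_eq_mul, one_mul]
    field_simp
    ring
  rw [he]
  exact (continuous_const.mul hcont).sub continuous_const
end

section
/- For H ∈ (0,1) with H < 1/2 and the constant C_H = Γ(2H)Γ(1/2-H)(1/2-H)/B(2-2H,2H) (resp. C_H = 1 for H = 1/2, C_H = Γ(H-1/2)/B(2-2H,H-1/2) for H > 1/2), the operator K_H defined via the fractional integral composition satisfies K_H(C_H x^{1/2-H})(t) = t for all t ∈ [0,T]; in the Brownian case H = 1/2 this reduces to ∫_0^t 1 ds = t. -/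
open MeasureTheory intervalIntegral Real

/-- Left Riemann–Liouville fractional integral of order `α`:
`(I_{0+}^α g)(t) = (1/Γ(α)) ∫_0^t (t-s)^{α-1} g(s) ds`. -/
noncomputable def RL (α : ℝ) (g : ℝ → ℝ) (t : ℝ) : ℝ :=
  (1 / Real.Gamma α) * ∫ s in (0:ℝ)..t, (t - s) ^ (α - 1) * g s

/-- The Beta function `B(a,b) = Γ(a)Γ(b)/Γ(a+b)`. -/
noncomputable def Bfun (a b : ℝ) : ℝ :=
  Real.Gamma a * Real.Gamma b / Real.Gamma (a + b)

/-- The operator `K_H`: for `H < 1/2`, `K_H f = I_{0+}^{2H} s^{1/2-H} I_{0+}^{1/2-H} s^{H-1/2} f`;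
for `H > 1/2`, `K_H f = I_{0+}^1 s^{H-1/2} I_{0+}^{H-1/2} s^{1/2-H} f`; for `H = 1/2`
it is plain integration. -/
noncomputable def KHop (H : ℝ) (f : ℝ → ℝ) : ℝ → ℝ :=
  if H < 1/2 then
    RL (2*H) (fun s => s ^ (1/2 - H) * RL (1/2 - H) (fun r => r ^ (H - 1/2) * f r) s)
  else if 1/2 < H then
    RL 1 (fun s => s ^ (H - 1/2) * RL (H - 1/2) (fun r => r ^ (1/2 - H) * f r) s)
  else fun t => ∫ s in (0:ℝ)..t, f s

/-- The constant `C_H` from the paper. -/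
noncomputable def CH (H : ℝ) : ℝ :=
  if H < 1/2 then
    Real.Gamma (2*H) * Real.Gamma (1/2 - H) * (1/2 - H) / Bfun (2 - 2*H) (2*H)
  else if 1/2 < H then
    Real.Gamma (H - 1/2) / Bfun (2 - 2*H) (H - 1/2)
  else 1

lemma betaInt (a b : ℝ) (ha : 0 < a) (hb : 0 < b) :
    ∫ x in (0:ℝ)..1, x^(a-1) * (1-x)^(b-1) = Bfun a b := by
  have key := Complex.Gamma_mul_Gamma_eq_betaIntegral (s := (a:ℂ)) (t := (b:ℂ)) (by simpa) (by simpa)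
  have hG : Complex.Gamma ((a:ℂ)+(b:ℂ)) ≠ 0 := by
    rw [← Complex.ofReal_add, Complex.Gamma_ofReal]
    exact_mod_cast (Real.Gamma_pos_of_pos (by positivity)).ne'
  have hbeta : Complex.betaIntegral a b = ((Bfun a b : ℝ) : ℂ) := by
    rw [Bfun]
    push_cast
    rw [← Complex.Gamma_ofReal, ← Complex.Gamma_ofReal, ← Complex.Gamma_ofReal]
    push_cast
    field_simp at key ⊢
    rw [key]
  have heq : Complex.betaIntegral a b = ((∫ x in (0:ℝ)..1, x^(a-1) * (1-x)^(b-1) : ℝ) : ℂ) := by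
    rw [Complex.betaIntegral, ← intervalIntegral.integral_ofReal]
    refine intervalIntegral.integral_congr (fun x hx => ?_)
    rw [Set.uIcc_of_le (by norm_num)] at hx
    simp only [Complex.ofReal_mul, Complex.ofReal_cpow hx.1,
      Complex.ofReal_cpow (show (0:ℝ) ≤ 1 - x from by linarith [hx.2])]
    push_cast
    ring
  have := heq.symm.trans hbeta
  exact_mod_cast this

lemma betaConv (a b t : ℝ) (ha : 0 < a) (hb : 0 < b) (ht : 0 < t) :
    ∫ s in (0:ℝ)..t, (t-s)^(a-1) * s^(b-1) = Bfun b a * t^(a+b-1) := by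
  have h1 : ∫ x in (0:ℝ)..1, (fun s => (t-s)^(a-1) * s^(b-1)) (t * x)
      = t⁻¹ • ∫ s in (t*0)..(t*1), (t-s)^(a-1) * s^(b-1) := by
    exact intervalIntegral.integral_comp_mul_left (fun s => (t-s)^(a-1) * s^(b-1)) ht.ne'
  rw [mul_zero, mul_one] at h1
  have h2 : ∫ x in (0:ℝ)..1, (fun s => (t-s)^(a-1) * s^(b-1)) (t * x)
      = t^(a+b-2) * ∫ x in (0:ℝ)..1, x^(b-1) * (1-x)^(a-1) := by
    rw [← intervalIntegral.integral_const_mul]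
    refine intervalIntegral.integral_congr (fun x hx => ?_)
    rw [Set.uIcc_of_le (by norm_num)] at hx
    simp only
    have e1 : t - t * x = t * (1 - x) := by ring
    have e2 : t^(a-1) * t^(b-1) = t^(a+b-2) := by
      rw [← Real.rpow_add ht]; ring_nf
    rw [e1, Real.mul_rpow ht.le (by linarith [hx.2]), Real.mul_rpow ht.le hx.1]
    calc t ^ (a - 1) * (1 - x) ^ (a - 1) * (t ^ (b - 1) * x ^ (b - 1))
        = (t^(a-1) * t^(b-1)) * ((1-x)^(a-1) * x^(b-1)) := by ring
      _ = t ^ (a + b - 2) * (x ^ (b - 1) * (1 - x) ^ (a - 1)) := by rw [e2]; ring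
  rw [h2, betaInt b a hb ha] at h1
  have : (∫ s in (0:ℝ)..t, (t-s)^(a-1) * s^(b-1)) = t * (t^(a+b-2) * Bfun b a) := by
    rw [smul_eq_mul] at h1
    field_simp at h1
    linarith [h1]
  have e3 : t * t^(a+b-2) = t^(a+b-1) := by
    nth_rewrite 1 [← Real.rpow_one t]; rw [← Real.rpow_add ht]; ring_nf
  rw [this, ← mul_assoc, e3]; ring

/-- For every `H ∈ (0,1)`, applying `K_H` to `s ↦ C_H s^{1/2-H}` gives the
identity function: `K_H(C_H x^{1/2-H})(t) = t`. -/
theorem stmt19 (H : ℝ) (hH : H ∈ Set.Ioo (0:ℝ) 1) (t : ℝ) (ht : 0 ≤ t) :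
    KHop H (fun s => CH H * s ^ (1/2 - H)) t = t := by
  obtain ⟨hH0, hH1⟩ := hH
  rcases ht.eq_or_lt with rfl | ht
  · unfold KHop RL
    split_ifs <;> simp
  rcases lt_trichotomy H (1/2) with hlt | heq | hgt
  · -- H < 1/2
    have hβ : (0:ℝ) < 1/2 - H := by linarith
    have hα : (0:ℝ) < 2*H := by linarith
    have h2H : (0:ℝ) < 2 - 2*H := by linarith
    have hΓβ := Real.Gamma_pos_of_pos hβ
    have hΓα := Real.Gamma_pos_of_pos hα
    have hB : 0 < Bfun (2 - 2*H) (2*H) := by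
      rw [Bfun]
      have := Real.Gamma_pos_of_pos h2H
      have := Real.Gamma_pos_of_pos (show (0:ℝ) < 2 - 2*H + 2*H by linarith)
      positivity
    have hCH : CH H = Real.Gamma (2*H) * Real.Gamma (1/2 - H) * (1/2 - H) / Bfun (2 - 2*H) (2*H) := by
      rw [CH, if_pos hlt]
    rw [KHop, if_pos hlt, RL]
    set c2 : ℝ := CH H * (Bfun 1 (1/2 - H) / Real.Gamma (1/2 - H)) with hc2
    have hg : ∀ s, 0 < s →
        s ^ (1/2 - H) * RL (1/2 - H) (fun r => r ^ (H - 1/2) * (CH H * r ^ (1/2 - H))) s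
          = c2 * s ^ ((2 - 2*H) - 1) := by
      intro s hs
      have hinner : (∫ r in (0:ℝ)..s, (s - r) ^ ((1/2 - H) - 1) *
          (r ^ (H - 1/2) * (CH H * r ^ (1/2 - H))))
          = CH H * (Bfun 1 (1/2 - H) * s ^ ((1/2 - H) + 1 - 1)) := by
        rw [← betaConv (1/2 - H) 1 s hβ one_pos hs, ← intervalIntegral.integral_const_mul]
        apply intervalIntegral.integral_congr_ae
        filter_upwards with r hr
        have hr0 : 0 < r := lt_of_le_of_lt (le_inf le_rfl hs.le) hr.1
        have : r ^ (H - 1/2) * r ^ (1/2 - H) = 1 := by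
          rw [← Real.rpow_add hr0]; norm_num
        have h0 : r ^ ((1:ℝ) - 1) = 1 := by
          norm_num
        calc (s - r) ^ ((1/2 - H) - 1) * (r ^ (H - 1/2) * (CH H * r ^ (1/2 - H)))
            = CH H * ((s - r) ^ ((1/2 - H) - 1)) * (r ^ (H - 1/2) * r ^ (1/2 - H)) := by ring
          _ = CH H * ((s - r) ^ ((1/2 - H) - 1) * r ^ ((1:ℝ) - 1)) := by rw [this, h0]; ring
      rw [RL, hinner]
      have hexp : s ^ (1/2 - H) * s ^ ((1/2 - H) + 1 - 1) = s ^ ((2 - 2*H) - 1) := by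
        rw [← Real.rpow_add hs]; ring_nf
      calc s ^ (1/2 - H) * (1 / Real.Gamma (1/2 - H) *
            (CH H * (Bfun 1 (1/2 - H) * s ^ ((1/2 - H) + 1 - 1))))
          = c2 * (s ^ (1/2 - H) * s ^ ((1/2 - H) + 1 - 1)) := by rw [hc2]; ring
        _ = c2 * s ^ ((2 - 2*H) - 1) := by rw [hexp]
    have houter : (∫ s in (0:ℝ)..t, (t - s) ^ (2*H - 1) *
        (s ^ (1/2 - H) * RL (1/2 - H) (fun r => r ^ (H - 1/2) * (CH H * r ^ (1/2 - H))) s))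
        = c2 * (Bfun (2 - 2*H) (2*H) * t ^ (2*H + (2 - 2*H) - 1)) := by
      rw [← betaConv (2*H) (2 - 2*H) t hα h2H ht, ← intervalIntegral.integral_const_mul]
      apply intervalIntegral.integral_congr_ae
      filter_upwards with s hs
      rw [hg s (lt_of_le_of_lt (le_inf le_rfl ht.le) hs.1)]; ring
    rw [houter]
    have htexp : t ^ (2*H + (2 - 2*H) - 1) = t := by
      norm_num
    rw [htexp]
    have hB1 : Bfun 1 (1/2 - H) = 1 / (1/2 - H) := by
      rw [Bfun, Real.Gamma_one, one_mul, add_comm, Real.Gamma_add_one hβ.ne',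
        mul_comm (1/2 - H), div_mul_eq_div_div, div_self hΓβ.ne']
    have hc2' : c2 = Real.Gamma (2*H) / Bfun (2 - 2*H) (2*H) := by
      rw [hc2, hCH, hB1, div_div, mul_one_div, div_div,
        div_eq_div_iff (mul_ne_zero hB.ne' (by positivity)) hB.ne']
      ring
    rw [hc2']
    field_simp
    exact div_self (by convert hB.ne' using 2; ring)
  · -- H = 1/2
    have h1 : ¬ H < 1/2 := by rw [heq]; exact lt_irrefl _
    have h2 : ¬ (1:ℝ)/2 < H := by rw [heq]; exact lt_irrefl _
    rw [KHop, if_neg h1, if_neg h2, CH, if_neg h1, if_neg h2]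
    have : (fun s : ℝ => (1:ℝ) * s ^ (1/2 - H)) = fun _ => (1:ℝ) := by
      funext s
      rw [heq]
      norm_num
    rw [this]
    simp
  · -- H > 1/2
    have hγ : (0:ℝ) < H - 1/2 := by linarith
    have h2H : (0:ℝ) < 2 - 2*H := by linarith
    have hΓγ := Real.Gamma_pos_of_pos hγ
    have hB : 0 < Bfun (2 - 2*H) (H - 1/2) := by
      rw [Bfun]
      have := Real.Gamma_pos_of_pos h2H
      have := Real.Gamma_pos_of_pos (show (0:ℝ) < 2 - 2*H + (H - 1/2) by linarith)
      positivity
    have h1 : ¬ H < 1/2 := by linarith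
    have hCH : CH H = Real.Gamma (H - 1/2) / Bfun (2 - 2*H) (H - 1/2) := by
      rw [CH, if_neg h1, if_pos hgt]
    rw [KHop, if_neg h1, if_pos hgt, RL]
    set c2 : ℝ := CH H * (Bfun (2 - 2*H) (H - 1/2) / Real.Gamma (H - 1/2)) with hc2
    have hg : ∀ s, 0 < s →
        s ^ (H - 1/2) * RL (H - 1/2) (fun r => r ^ (1/2 - H) * (CH H * r ^ (1/2 - H))) s
          = c2 := by
      intro s hs
      have hinner : (∫ r in (0:ℝ)..s, (s - r) ^ ((H - 1/2) - 1) *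
          (r ^ (1/2 - H) * (CH H * r ^ (1/2 - H))))
          = CH H * (Bfun (2 - 2*H) (H - 1/2) * s ^ ((H - 1/2) + (2 - 2*H) - 1)) := by
        rw [← betaConv (H - 1/2) (2 - 2*H) s hγ h2H hs, ← intervalIntegral.integral_const_mul]
        apply intervalIntegral.integral_congr_ae
        filter_upwards with r hr
        have hr0 : 0 < r := lt_of_le_of_lt (le_inf le_rfl hs.le) hr.1
        have hrr : r ^ (1/2 - H) * r ^ (1/2 - H) = r ^ ((2 - 2*H) - 1) := by
          rw [← Real.rpow_add hr0]; ring_nf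
        calc (s - r) ^ ((H - 1/2) - 1) * (r ^ (1/2 - H) * (CH H * r ^ (1/2 - H)))
            = CH H * ((s - r) ^ ((H - 1/2) - 1)) * (r ^ (1/2 - H) * r ^ (1/2 - H)) := by ring
          _ = CH H * ((s - r) ^ ((H - 1/2) - 1) * r ^ ((2 - 2*H) - 1)) := by rw [hrr]; ring
      rw [RL, hinner]
      have hexp : s ^ (H - 1/2) * s ^ ((H - 1/2) + (2 - 2*H) - 1) = 1 := by
        rw [← Real.rpow_add hs]
        have : (H - 1/2) + ((H - 1/2) + (2 - 2*H) - 1) = 0 := by ring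
        rw [this, Real.rpow_zero]
      calc s ^ (H - 1/2) * (1 / Real.Gamma (H - 1/2) *
            (CH H * (Bfun (2 - 2*H) (H - 1/2) * s ^ ((H - 1/2) + (2 - 2*H) - 1))))
          = c2 * (s ^ (H - 1/2) * s ^ ((H - 1/2) + (2 - 2*H) - 1)) := by rw [hc2]; ring
        _ = c2 := by rw [hexp, mul_one]
    have houter : (∫ s in (0:ℝ)..t, (t - s) ^ ((1:ℝ) - 1) *
        (s ^ (H - 1/2) * RL (H - 1/2) (fun r => r ^ (1/2 - H) * (CH H * r ^ (1/2 - H))) s))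
        = c2 * t := by
      have : (∫ s in (0:ℝ)..t, (t - s) ^ ((1:ℝ) - 1) *
          (s ^ (H - 1/2) * RL (H - 1/2) (fun r => r ^ (1/2 - H) * (CH H * r ^ (1/2 - H))) s))
          = ∫ s in (0:ℝ)..t, c2 := by
        apply intervalIntegral.integral_congr_ae
        filter_upwards with s hs
        rw [hg s (lt_of_le_of_lt (le_inf le_rfl ht.le) hs.1)]
        norm_num
      rw [this, intervalIntegral.integral_const, smul_eq_mul, sub_zero, mul_comm]
    rw [houter, hc2, hCH, Real.Gamma_one, div_mul_div_comm,
      mul_comm (Bfun (2 - 2*H) (H - 1/2)) (Real.Gamma (H - 1/2)),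
      div_self (mul_pos hΓγ hB).ne']
    norm_num
end
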